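/- Let R be even, R ≥ 4, with index set I = { i ∈ {0,...,R(R-1)} : S_i((0,1)) ∩ {0, 2/R, 4/R, ..., 1} = ∅ } where S_i(x) = x/R + i/R². Then the union of S_i([0,1]) over i ∈ I together with S_{t_j}([0,1]) for j = 0,...,R/2 (t_j = 2j(R-1)) covers [0,1]. -/

import Mathlib

open Set

/-- with `R ≥ 4` even, `S_i(x) = x/R + i/R²` and
`I = {i ≤ R(R-1) : S_i((0,1)) avoids all points 2j/R, j = 0, …, R/2}`,
the images `S_i([0,1])`, `i ∈ I`, together with `S_{t_j}([0,1])`,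
`t_j = 2j(R-1)`, `j = 0, …, R/2`, cover `[0,1]`. -/
theorem stmt_11 (R : ℕ) (hR : 4 ≤ R) (hEven : Even R) :
    Set.Icc (0 : ℝ) 1 ⊆
      (⋃ i ∈ {i : ℕ | i ≤ R * (R - 1) ∧
          ∀ j ≤ R / 2, (2 * (j : ℝ) / R) ∉
            (fun x : ℝ => x / R + (i : ℝ) / (R : ℝ) ^ 2) '' Set.Ioo 0 1},
        (fun x : ℝ => x / R + (i : ℝ) / (R : ℝ) ^ 2) '' Set.Icc 0 1) ∪
      ⋃ j ∈ Finset.range (R / 2 + 1),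
        (fun x : ℝ => x / R + ((2 * j * (R - 1) : ℕ) : ℝ) / (R : ℝ) ^ 2) ''
          Set.Icc 0 1 := by
  have hR0 : (0:ℝ) < R := by
    have : (4:ℝ) ≤ R := by exact_mod_cast hR
    linarith
  have hRne : (R:ℝ) ≠ 0 := hR0.ne'
  intro x hx
  obtain ⟨hx0, hx1⟩ := hx
  set m : ℕ := min (Nat.floor ((R:ℝ) * x)) (R - 1) with hm
  have hmle : m ≤ R - 1 := min_le_right _ _
  have h1 : (m:ℝ) ≤ (R:ℝ) * x := by
    have : (m:ℝ) ≤ (Nat.floor ((R:ℝ)*x) : ℝ) := by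
      exact_mod_cast min_le_left _ _
    have hfl : (Nat.floor ((R:ℝ)*x) : ℝ) ≤ (R:ℝ) * x :=
      Nat.floor_le (by positivity)
    linarith
  have hcast : ((R - 1 : ℕ) : ℝ) = (R:ℝ) - 1 := by
    have : 1 ≤ R := by omega
    push_cast [this]
    ring
  have h2 : (R:ℝ) * x ≤ (m:ℝ) + 1 := by
    rcases min_cases (Nat.floor ((R:ℝ)*x)) (R-1) with ⟨he, _⟩ | ⟨he, _⟩
    · rw [hm, he]
      exact (Nat.lt_floor_add_one _).le
    · rw [hm, he, hcast]
      nlinarith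
  left
  refine mem_iUnion₂.mpr ⟨m * R, ⟨?_, ?_⟩, ?_⟩
  · calc m * R ≤ (R - 1) * R := Nat.mul_le_mul_right R hmle
      _ = R * (R - 1) := Nat.mul_comm _ _
  · intro j hj hmem
    obtain ⟨y, ⟨hy0, hy1⟩, hxy⟩ := hmem
    simp only at hxy
    have key : y = 2*(j:ℝ) - m := by
      have h : y / R + ((m * R : ℕ):ℝ) / (R:ℝ)^2 = 2 * j / R := hxy
      push_cast at h
      field_simp at h
      have h3 : (y + (m:ℝ) - 2*(j:ℝ)) * (R:ℝ)^3 = 0 := by linear_combination (R:ℝ)^3 * h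
      have hR3 : (R:ℝ)^3 ≠ 0 := by positivity
      have h4 := (mul_eq_zero.mp h3).resolve_right hR3
      linarith
    have hlt1 : (m:ℝ) < 2*(j:ℝ) := by linarith
    have hlt2 : 2*(j:ℝ) < (m:ℝ) + 1 := by linarith
    have hn1 : m < 2*j := by exact_mod_cast hlt1
    have hn2 : 2*j < m + 1 := by exact_mod_cast hlt2
    omega
  · refine ⟨(R:ℝ)*x - m, ⟨by linarith, by linarith⟩, ?_⟩
    simp only
    push_cast
    field_simp
    ring
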